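/- arXiv:1702.02257 — 2 statements merged into one kernel-verified Lean document; each statement's English description precedes it below -/
import Mathlib

section
/- Let 𝒱 be a join-specification of P, Φ = Γ_𝒱, and Υ the recursively defined operator using 𝒰_Φ without downward closure at successor steps. Then the complete lattice Φ[𝒫(P)] of Φ-closed sets is a frame (i.e., finite meets distribute over arbitrary joins: I ∧ ⋁_J K_j = ⋁_J (I ∧ K_j)) if and only if Φ(S) = Υ(S) for all S ⊆ P. -/
universe u

variable {P : Type u} [PartialOrder P]

/-- The downward closure of a set in a poset. -/
def dcl (S : Set P) : Set P := {q | ∃ s ∈ S, q ≤ s}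

/-- A join-specification: a collection of nonempty subsets each having a join,
containing all singletons. -/
def IsJoinSpec (U : Set (Set P)) : Prop :=
  (∀ S ∈ U, ∃ j, IsLUB S j) ∧ (∀ p : P, {p} ∈ U) ∧ ∅ ∉ U

/-- A `U`-ideal: a down-set closed under joins of members of `U` contained in it. -/
def IsUIdeal (U : Set (Set P)) (I : Set P) : Prop :=
  IsLowerSet I ∧ ∀ S ∈ U, S ⊆ I → ∀ j, IsLUB S j → j ∈ I

/-- The smallest `U`-ideal containing `S`. -/
def GammaU (U : Set (Set P)) (S : Set P) : Set P :=
  ⋂₀ {I | IsUIdeal U I ∧ S ⊆ I}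

/-- A standard closure operator on the powerset of a poset. -/
def IsStdClosure (Γ : Set P → Set P) : Prop :=
  (∀ S, S ⊆ Γ S) ∧ (∀ S T, S ⊆ T → Γ S ⊆ Γ T) ∧ (∀ S, Γ (Γ S) = Γ S) ∧
  (∀ p : P, Γ {p} = {q | q ≤ p})

/-- The join-specification induced by a standard closure operator. -/
def UGamma (Γ : Set P → Set P) : Set (Set P) :=
  {S | (∃ j, IsLUB S j) ∧ ∀ C, Γ C = C → S ⊆ C → ∀ j, IsLUB S j → j ∈ C}

/-- The radius of a join-specification: the smallest cardinal exceeding the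
cardinality of each of its members. -/
noncomputable def radius (U : Set (Set P)) : Cardinal :=
  ⨆ S : U, Order.succ (Cardinal.mk S.1)

/-- The ordinal of the smallest regular cardinal at least the radius of `U`. -/
noncomputable def chiOrd (U : Set (Set P)) : Ordinal :=
  (sInf {c : Cardinal | c.IsRegular ∧ radius U ≤ c}).ord

/-- The transfinite iteration building the smallest `U`-ideal (with downward
closure at successor steps). -/
noncomputable def gammaIter (U : Set (Set P)) (S : Set P) (o : Ordinal) : Set P :=
  Ordinal.limitRecOn o (dcl S)
    (fun _ ih => dcl {p | ∃ T ∈ U, T ⊆ ih ∧ IsLUB T p})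
    (fun o _ ih => ⋃ (b : Ordinal) (h : b < o), ih b h)

/-- The transfinite iteration without downward closure at successor steps. -/
noncomputable def upsIter (U : Set (Set P)) (S : Set P) (o : Ordinal) : Set P :=
  Ordinal.limitRecOn o (dcl S)
    (fun _ ih => {p | ∃ T ∈ U, T ⊆ ih ∧ IsLUB T p})
    (fun o _ ih => ⋃ (b : Ordinal) (h : b < o), ih b h)

/-- The operator `Υ` built from `𝒰_Φ` where `Φ = Γ_𝒱`. -/
noncomputable def Upsilon (V : Set (Set P)) (S : Set P) : Set P :=
  upsIter (UGamma (GammaU V)) S (chiOrd (UGamma (GammaU V)))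

/-! ### Auxiliary lemmas -/

section Aux

variable (V : Set (Set P))

lemma gammaU_subset (S : Set P) : S ⊆ GammaU V S :=
  fun _ hp _ hI => hI.2 hp

lemma isUIdeal_gammaU (S : Set P) : IsUIdeal V (GammaU V S) := by
  constructor
  · intro a b hba ha I hI
    exact hI.1.1 hba (ha I hI)
  · intro T hT hTsub j hj I hI
    exact hI.1.2 T hT (fun t ht => hTsub ht I hI) j hj

lemma gammaU_mono {S T : Set P} (h : S ⊆ T) : GammaU V S ⊆ GammaU V T := by
  intro p hp I hI
  exact hp I ⟨hI.1, h.trans hI.2⟩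

lemma gammaU_le {S I : Set P} (hI : IsUIdeal V I) (h : S ⊆ I) : GammaU V S ⊆ I :=
  fun _ hp => hp I ⟨hI, h⟩

lemma gammaU_closed_iff {I : Set P} : GammaU V I = I ↔ IsUIdeal V I := by
  constructor
  · intro h; rw [← h]; exact isUIdeal_gammaU V I
  · intro h; exact subset_antisymm (gammaU_le V h subset_rfl) (gammaU_subset V I)

lemma isUIdeal_down (u : P) : IsUIdeal V {x | x ≤ u} := by
  refine ⟨fun a b hba ha => hba.trans ha, ?_⟩
  intro T _ hsub j hj
  exact hj.2 fun t ht => hsub ht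

lemma gammaU_singleton (u : P) : GammaU V {u} = {x | x ≤ u} := by
  apply subset_antisymm
  · exact gammaU_le V (isUIdeal_down V u) (by simp)
  · intro x hx
    exact (isUIdeal_gammaU V {u}).1 hx (gammaU_subset V {u} rfl)

lemma gammaU_dcl (T : Set P) : GammaU V (dcl T) = GammaU V T := by
  apply subset_antisymm
  · apply gammaU_le V (isUIdeal_gammaU V T)
    rintro x ⟨t, ht, hxt⟩
    exact (isUIdeal_gammaU V T).1 hxt (gammaU_subset V T ht)
  · exact gammaU_mono V fun t ht => ⟨t, ht, le_rfl⟩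

variable (hV : IsJoinSpec V)
include hV

lemma isUIdeal_empty : IsUIdeal V (∅ : Set P) := by
  refine ⟨fun a b _ ha => ha.elim, ?_⟩
  intro T hT hsub _ _
  rw [Set.subset_empty_iff] at hsub
  exact absurd (hsub ▸ hT) hV.2.2

lemma gammaU_empty : GammaU V (∅ : Set P) = ∅ :=
  (gammaU_closed_iff V).2 (isUIdeal_empty V hV)

omit hV

lemma singleton_mem_U (p : P) : {p} ∈ UGamma (GammaU V) := by
  refine ⟨⟨p, isLUB_singleton⟩, ?_⟩
  intro C _ hsub j hj
  have : j = p := hj.unique isLUB_singleton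
  exact this ▸ hsub rfl

lemma mem_closed_of_U {T C : Set P} {j : P} (hT : T ∈ UGamma (GammaU V))
    (hC : IsUIdeal V C) (hsub : T ⊆ C) (hj : IsLUB T j) : j ∈ C :=
  hT.2 C ((gammaU_closed_iff V).2 hC) hsub j hj

include hV in
lemma V_subset_U : V ⊆ UGamma (GammaU V) := by
  intro S hS
  refine ⟨hV.1 S hS, ?_⟩
  intro C hC hsub j hj
  exact ((gammaU_closed_iff V).1 hC).2 S hS hsub j hj

lemma upsIter_zero (U : Set (Set P)) (S : Set P) : upsIter U S 0 = dcl S :=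
  Ordinal.limitRecOn_zero _ _ _

lemma upsIter_succ (U : Set (Set P)) (S : Set P) (o : Ordinal) :
    upsIter U S (Order.succ o) = {p | ∃ T ∈ U, T ⊆ upsIter U S o ∧ IsLUB T p} :=
  Ordinal.limitRecOn_succ _ _ _ _

lemma upsIter_limit (U : Set (Set P)) (S : Set P) {o : Ordinal} (h : Order.IsSuccLimit o) :
    upsIter U S o = ⋃ (b : Ordinal) (_ : b < o), upsIter U S b :=
  Ordinal.limitRecOn_limit _ _ _ _ h

lemma upsIter_le_succ (S : Set P) (o : Ordinal) :
    upsIter (UGamma (GammaU V)) S o ⊆ upsIter (UGamma (GammaU V)) S (Order.succ o) := by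
  intro p hp
  rw [upsIter_succ]
  exact ⟨{p}, singleton_mem_U V p, Set.singleton_subset_iff.2 hp, isLUB_singleton⟩

lemma upsIter_mono (S : Set P) {b o : Ordinal} (h : b ≤ o) :
    upsIter (UGamma (GammaU V)) S b ⊆ upsIter (UGamma (GammaU V)) S o := by
  induction o using Ordinal.limitRecOn with
  | zero => rw [nonpos_iff_eq_zero.mp h]
  | add_one o ih =>
    rw [Ordinal.add_one_eq_succ] at *
    rcases h.lt_or_eq with h' | h'
    · exact (ih (Order.lt_succ_iff.mp h')).trans (upsIter_le_succ V S o)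
    · rw [h']
  | limit o ho ih =>
    rcases h.lt_or_eq with h' | h'
    · rw [upsIter_limit _ _ ho]
      exact Set.subset_iUnion₂ (s := fun c (_ : c < o) => upsIter _ S c) b h'
    · rw [h']

lemma upsIter_subset_gammaU (S : Set P) (o : Ordinal) :
    upsIter (UGamma (GammaU V)) S o ⊆ GammaU V S := by
  induction o using Ordinal.limitRecOn with
  | zero =>
    rw [upsIter_zero]
    rintro q ⟨s, hs, hqs⟩
    exact (isUIdeal_gammaU V S).1 hqs (gammaU_subset V S hs)
  | add_one o ih =>
    rw [Ordinal.add_one_eq_succ] at *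
    rw [upsIter_succ]
    rintro p ⟨T, hT, hsub, hlub⟩
    exact mem_closed_of_U V hT (isUIdeal_gammaU V S) (hsub.trans ih) hlub
  | limit o ho ih =>
    rw [upsIter_limit _ _ ho]
    exact Set.iUnion₂_subset fun b hb => ih b hb

lemma chi_spec (U : Set (Set P)) :
    (sInf {c : Cardinal | c.IsRegular ∧ radius U ≤ c}).IsRegular ∧
      radius U ≤ sInf {c : Cardinal | c.IsRegular ∧ radius U ≤ c} := by
  have hne : {c : Cardinal | c.IsRegular ∧ radius U ≤ c}.Nonempty :=
    ⟨Order.succ (max (radius U) Cardinal.aleph0),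
      Cardinal.isRegular_succ (le_max_right _ _),
      (le_max_left _ _).trans (Order.le_succ _)⟩
  exact csInf_mem hne

lemma chi_isLimit (U : Set (Set P)) : Order.IsSuccLimit (chiOrd U) :=
  Cardinal.isSuccLimit_ord (chi_spec U).1.aleph0_le

/-- Stabilization: the iteration at stage `χ` is closed under joins of members of `𝒰`. -/
lemma upsIter_chi_join (S T : Set P) (j : P) (hT : T ∈ UGamma (GammaU V))
    (hsub : T ⊆ upsIter (UGamma (GammaU V)) S (chiOrd (UGamma (GammaU V))))
    (hj : IsLUB T j) :
    j ∈ upsIter (UGamma (GammaU V)) S (chiOrd (UGamma (GammaU V))) := by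
  set U := UGamma (GammaU V) with hU
  have hlim := chi_isLimit (P := P) U
  have hreg := (chi_spec (P := P) U).1
  have hrad := (chi_spec (P := P) U).2
  -- cardinality of T is below χ
  have hTle : Order.succ (Cardinal.mk T) ≤ radius U := by
    exact le_ciSup (Cardinal.bddAbove_range _) (⟨T, hT⟩ : U)
  have hcard : Cardinal.mk T < sInf {c : Cardinal | c.IsRegular ∧ radius U ≤ c} :=
    lt_of_lt_of_le (Order.lt_succ _) (hTle.trans hrad)
  -- choose stages
  have hch : ∀ t : T, ∃ b : Ordinal, b < chiOrd U ∧ (t : P) ∈ upsIter U S b := by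
    intro t
    have := hsub t.2
    rw [upsIter_limit U S hlim] at this
    simpa using this
  choose f hflt hfmem using hch
  have hβ : iSup f < chiOrd U := by
    apply Ordinal.iSup_lt_ord _ hflt
    rw [chiOrd, hreg.cof_eq]
    exact hcard
  have hTsub : T ⊆ upsIter U S (iSup f) := by
    intro t ht
    exact upsIter_mono V S (Ordinal.le_iSup f ⟨t, ht⟩) (hfmem ⟨t, ht⟩)
  have hjmem : j ∈ upsIter U S (Order.succ (iSup f)) := by
    rw [upsIter_succ]
    exact ⟨T, hT, hTsub, hj⟩
  exact upsIter_mono V S (hlim.succ_lt hβ).le hjmem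

lemma isUIdeal_inter {I J : Set P} (hI : IsUIdeal V I) (hJ : IsUIdeal V J) :
    IsUIdeal V (I ∩ J) := by
  refine ⟨fun a b hba ⟨h1, h2⟩ => ⟨hI.1 hba h1, hJ.1 hba h2⟩, ?_⟩
  intro T hT hsub jj hjj
  exact ⟨hI.2 T hT (hsub.trans Set.inter_subset_left) jj hjj,
         hJ.2 T hT (hsub.trans Set.inter_subset_right) jj hjj⟩

/-- Under the frame law, each stage of the `Υ`-iteration is a lower set. -/
lemma upsIter_lower
    (hframe : ∀ I : Set P, GammaU V I = I →
      ∀ 𝒦 : Set (Set P), (∀ K ∈ 𝒦, GammaU V K = K) →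
        I ∩ GammaU V (⋃₀ 𝒦) = GammaU V (⋃ K ∈ 𝒦, I ∩ K))
    (S : Set P) (o : Ordinal) :
    IsLowerSet (upsIter (UGamma (GammaU V)) S o) := by
  induction o using Ordinal.limitRecOn with
  | zero =>
    rw [upsIter_zero]
    rintro a b hba ⟨s, hs, has⟩
    exact ⟨s, hs, hba.trans has⟩
  | add_one o ih =>
    rw [Ordinal.add_one_eq_succ] at *
    rw [upsIter_succ]
    rintro a b hba ⟨T, hT, hsub, hlub⟩
    -- apply the frame law with `I = ↓b` and `𝒦 = {↓t : t ∈ T}`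
    have hIc : GammaU V {x | x ≤ b} = {x | x ≤ b} :=
      (gammaU_closed_iff V).2 (isUIdeal_down V b)
    set 𝒦 : Set (Set P) := (fun t => {x | x ≤ t}) '' T with h𝒦
    have h𝒦c : ∀ K ∈ 𝒦, GammaU V K = K := by
      rintro K ⟨t, _, rfl⟩
      exact (gammaU_closed_iff V).2 (isUIdeal_down V t)
    have hsU : ⋃₀ 𝒦 = dcl T := by
      ext x
      constructor
      · rintro ⟨K, ⟨t, ht, rfl⟩, hx⟩
        exact ⟨t, ht, hx⟩
      · rintro ⟨t, ht, hx⟩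
        exact ⟨{x | x ≤ t}, ⟨t, ht, rfl⟩, hx⟩
    have heq := hframe {x | x ≤ b} hIc 𝒦 h𝒦c
    rw [hsU, gammaU_dcl] at heq
    have hbmem : b ∈ {x | x ≤ b} ∩ GammaU V T := by
      refine ⟨le_refl b, ?_⟩
      have ha : a ∈ GammaU V T :=
        mem_closed_of_U V hT (isUIdeal_gammaU V T) (gammaU_subset V T) hlub
      exact (isUIdeal_gammaU V T).1 hba ha
    rw [heq] at hbmem
    set W : Set P := ⋃ K ∈ 𝒦, {x | x ≤ b} ∩ K with hW
    have hWmem : ∀ x, x ∈ W ↔ x ≤ b ∧ ∃ t ∈ T, x ≤ t := by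
      intro x
      constructor
      · intro hx
        obtain ⟨K, hK, hxK⟩ := Set.mem_iUnion₂.mp hx
        obtain ⟨t, ht, rfl⟩ := hK
        exact ⟨hxK.1, t, ht, hxK.2⟩
      · rintro ⟨hxb, t, ht, hxt⟩
        simp only [hW, Set.mem_iUnion]
        exact ⟨{x | x ≤ t}, ⟨t, ht, rfl⟩, hxb, hxt⟩
    -- b is the LUB of W
    have hub : b ∈ upperBounds W := fun x hx => ((hWmem x).1 hx).1
    have hWlub : IsLUB W b := by
      refine ⟨hub, ?_⟩
      intro u hu
      have : GammaU V W ⊆ {x | x ≤ u} :=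
        gammaU_le V (isUIdeal_down V u) fun x hx => hu hx
      exact this hbmem
    have hWU : W ∈ UGamma (GammaU V) := by
      refine ⟨⟨b, hWlub⟩, ?_⟩
      intro C hC hsubC jj hjj
      have : jj = b := hjj.unique hWlub
      subst this
      exact gammaU_le V ((gammaU_closed_iff V).1 hC) hsubC hbmem
    have hWsub : W ⊆ upsIter (UGamma (GammaU V)) S o := by
      intro x hx
      obtain ⟨_, t, ht, hxt⟩ := (hWmem x).1 hx
      exact ih hxt (hsub ht)
    exact ⟨W, hWU, hWsub, hWlub⟩
  | limit o ho ih =>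
    rw [upsIter_limit _ _ ho]
    rintro a b hba ha
    obtain ⟨c, hc, hac⟩ := by simpa using ha
    simp only [Set.mem_iUnion]
    exact ⟨c, hc, ih c hc hba hac⟩

end Aux

theorem frame_iff_phi_eq_upsilon
    (V : Set (Set P)) (hV : IsJoinSpec V) :
    (∀ I : Set P, GammaU V I = I →
      ∀ 𝒦 : Set (Set P), (∀ K ∈ 𝒦, GammaU V K = K) →
        I ∩ GammaU V (⋃₀ 𝒦) = GammaU V (⋃ K ∈ 𝒦, I ∩ K)) ↔
    (∀ S : Set P, GammaU V S = Upsilon V S) := by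
  constructor
  · -- frame ⇒ Φ = Υ
    intro hframe S
    apply subset_antisymm
    · apply gammaU_le V
      · refine ⟨upsIter_lower V hframe S _, ?_⟩
        intro T hT hsub j hj
        exact upsIter_chi_join V S T j (V_subset_U V hV hT) hsub hj
      · intro s hs
        have h0 : s ∈ upsIter (UGamma (GammaU V)) S 0 := by
          rw [upsIter_zero]; exact ⟨s, hs, le_rfl⟩
        exact upsIter_mono V S zero_le h0
    · exact upsIter_subset_gammaU V S _
  · -- Φ = Υ ⇒ frame
    intro hΦΥ I hI 𝒦 h𝒦
    have hIid : IsUIdeal V I := (gammaU_closed_iff V).1 hI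
    set J : Set P := GammaU V (⋃ K ∈ 𝒦, I ∩ K) with hJ
    apply subset_antisymm
    · rw [hΦΥ (⋃₀ 𝒦)]
      have key : ∀ o : Ordinal,
          I ∩ upsIter (UGamma (GammaU V)) (⋃₀ 𝒦) o ⊆ J := by
        intro o
        induction o using Ordinal.limitRecOn with
        | zero =>
          rw [upsIter_zero]
          rintro q ⟨hqI, s, hs, hqs⟩
          obtain ⟨K, hK, hsK⟩ := hs
          have hKid : IsUIdeal V K := (gammaU_closed_iff V).1 (h𝒦 K hK)
          exact gammaU_subset V _ (Set.mem_iUnion₂.mpr ⟨K, hK, hqI, hKid.1 hqs hsK⟩)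
        | add_one o ih =>
          rw [Ordinal.add_one_eq_succ] at *
          rw [upsIter_succ]
          rintro p ⟨hpI, T, hT, hsub, hlub⟩
          apply mem_closed_of_U V hT (isUIdeal_gammaU V _) _ hlub
          intro t ht
          exact ih ⟨hIid.1 (hlub.1 ht) hpI, hsub ht⟩
        | limit o ho ih =>
          rw [upsIter_limit _ _ ho]
          rintro p ⟨hpI, hp⟩
          obtain ⟨b, hb, hpb⟩ := by simpa using hp
          exact ih b hb ⟨hpI, hpb⟩
      exact key _
    · apply gammaU_le V (isUIdeal_inter V hIid (isUIdeal_gammaU V _))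
      intro x hx
      obtain ⟨K, hK, hxIK⟩ := Set.mem_iUnion₂.mp hx
      exact ⟨hxIK.1, gammaU_subset V _ (Set.mem_sUnion.mpr ⟨K, hK, hxIK.2⟩)⟩
end

section
/- For any poset P, the complete lattice of all down-sets of P closed under existing finite joins (ordered by inclusion) is a frame if and only if it is distributive. -/
universe u

variable {P : Type u} [PartialOrder P]

/-- The join-specification of all nonempty finite subsets with existing joins. -/
def finSpec (P : Type u) [PartialOrder P] : Set (Set P) :=
  {S | S.Finite ∧ S.Nonempty ∧ ∃ j, IsLUB S j}

section Aux

variable (U : Set (Set P))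

lemma uideal_sInter {𝒜 : Set (Set P)} (h : ∀ A ∈ 𝒜, IsUIdeal U A) :
    IsUIdeal U (⋂₀ 𝒜) := by
  constructor
  · intro a b hba hb A hA
    exact (h A hA).1 hba (hb A hA)
  · intro S hS hSsub j hj A hA
    exact (h A hA).2 S hS (fun x hx => hSsub hx A hA) j hj

lemma uideal_GammaU (S : Set P) : IsUIdeal U (GammaU U S) :=
  uideal_sInter U (fun _ hA => hA.1)

lemma subset_GammaU (S : Set P) : S ⊆ GammaU U S := by
  intro x hx A hA; exact hA.2 hx

lemma GammaU_least {S I : Set P} (hI : IsUIdeal U I) (h : S ⊆ I) : GammaU U S ⊆ I :=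
  Set.sInter_subset_of_mem ⟨hI, h⟩

lemma GammaU_mono {S T : Set P} (h : S ⊆ T) : GammaU U S ⊆ GammaU U T :=
  GammaU_least U (uideal_GammaU U T) (h.trans (subset_GammaU U T))

lemma GammaU_eq_of_ideal {I : Set P} (hI : IsUIdeal U I) : GammaU U I = I :=
  subset_antisymm (GammaU_least U hI subset_rfl) (subset_GammaU U I)

lemma GammaU_fixed_iff {I : Set P} : GammaU U I = I ↔ IsUIdeal U I :=
  ⟨fun h => h ▸ uideal_GammaU U I, GammaU_eq_of_ideal U⟩

lemma GammaU_union_GammaU (X Y : Set P) :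
    GammaU U (X ∪ GammaU U Y) = GammaU U (X ∪ Y) := by
  apply subset_antisymm
  · apply GammaU_least U (uideal_GammaU U _)
    apply Set.union_subset
    · exact Set.subset_union_left.trans (subset_GammaU U _)
    · exact GammaU_least U (uideal_GammaU U _)
        (Set.subset_union_right.trans (subset_GammaU U _))
  · exact GammaU_mono U (Set.union_subset_union_right X (subset_GammaU U Y))

lemma uideal_inter {I J : Set P} (hI : IsUIdeal U I) (hJ : IsUIdeal U J) :
    IsUIdeal U (I ∩ J) := by
  constructor
  · exact hI.1.inter hJ.1
  · intro S hS hsub j hj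
    exact ⟨hI.2 S hS (fun x hx => (hsub hx).1) j hj,
           hJ.2 S hS (fun x hx => (hsub hx).2) j hj⟩

end Aux

lemma empty_uideal : IsUIdeal (finSpec P) (∅ : Set P) := by
  constructor
  · intro a b _ hb; exact hb
  · intro S hS hsub _ _
    rcases hS.2.1 with ⟨x, hx⟩
    exact absurd (hsub hx) (Set.notMem_empty x)

lemma dcl_uideal (s : P) : IsUIdeal (finSpec P) {q | q ≤ s} := by
  constructor
  · intro a b hba hb; exact le_trans hba hb
  · intro S _ hsub j hj
    exact hj.2 (fun x hx => hsub hx)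

/-- Finite distributivity from binary distributivity. -/
lemma fin_distrib
    (hd : ∀ I K₁ K₂ : Set P, GammaU (finSpec P) I = I → GammaU (finSpec P) K₁ = K₁ →
      GammaU (finSpec P) K₂ = K₂ →
        I ∩ GammaU (finSpec P) (K₁ ∪ K₂) = GammaU (finSpec P) ((I ∩ K₁) ∪ (I ∩ K₂)))
    {I : Set P} (hI : IsUIdeal (finSpec P) I)
    {S : Set P} (hS : S.Finite) (A : P → Set P)
    (hA : ∀ s ∈ S, IsUIdeal (finSpec P) (A s)) :
    I ∩ GammaU (finSpec P) (⋃ s ∈ S, A s) = GammaU (finSpec P) (⋃ s ∈ S, I ∩ A s) := by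
  revert hA
  refine Set.Finite.induction_on S hS ?_ ?_
  · intro _
    simp [GammaU_eq_of_ideal (finSpec P) empty_uideal]
  · intro a s _ hsf ih hA
    have hAa : IsUIdeal (finSpec P) (A a) := hA a (Set.mem_insert a s)
    have hA' : ∀ x ∈ s, IsUIdeal (finSpec P) (A x) :=
      fun x hx => hA x (Set.mem_insert_of_mem a hx)
    have ih' := ih hA'
    rw [Set.biUnion_insert, Set.biUnion_insert]
    calc I ∩ GammaU (finSpec P) (A a ∪ ⋃ x ∈ s, A x)
        = I ∩ GammaU (finSpec P) (A a ∪ GammaU (finSpec P) (⋃ x ∈ s, A x)) := by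
          rw [GammaU_union_GammaU]
      _ = GammaU (finSpec P)
            ((I ∩ A a) ∪ (I ∩ GammaU (finSpec P) (⋃ x ∈ s, A x))) :=
          hd I (A a) (GammaU (finSpec P) (⋃ x ∈ s, A x))
            (GammaU_eq_of_ideal _ hI) (GammaU_eq_of_ideal _ hAa)
            (GammaU_eq_of_ideal _ (uideal_GammaU _ _))
      _ = GammaU (finSpec P)
            ((I ∩ A a) ∪ GammaU (finSpec P) (⋃ x ∈ s, I ∩ A x)) := by rw [ih']
      _ = GammaU (finSpec P) ((I ∩ A a) ∪ ⋃ x ∈ s, I ∩ A x) :=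
          GammaU_union_GammaU (finSpec P) _ _

theorem finite_join_ideals_frame_iff_distributive :
    (∀ I : Set P, GammaU (finSpec P) I = I →
      ∀ 𝒦 : Set (Set P), (∀ K ∈ 𝒦, GammaU (finSpec P) K = K) →
        I ∩ GammaU (finSpec P) (⋃₀ 𝒦) = GammaU (finSpec P) (⋃ K ∈ 𝒦, I ∩ K)) ↔
    (∀ I K₁ K₂ : Set P, GammaU (finSpec P) I = I → GammaU (finSpec P) K₁ = K₁ →
      GammaU (finSpec P) K₂ = K₂ →
        I ∩ GammaU (finSpec P) (K₁ ∪ K₂) = GammaU (finSpec P) ((I ∩ K₁) ∪ (I ∩ K₂))) := by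
  constructor
  · intro hf I K₁ K₂ hI hK₁ hK₂
    have := hf I hI {K₁, K₂} (by
      intro K hK
      rcases hK with h | h
      · rw [h]; exact hK₁
      · rw [h]; exact hK₂)
    rw [Set.sUnion_pair] at this
    rw [this]
    simp [Set.biUnion_pair]
  · intro hd I hI 𝒦 h𝒦
    have hIid : IsUIdeal (finSpec P) I := (GammaU_fixed_iff (finSpec P)).mp hI
    set Γ := GammaU (finSpec P) with hΓ
    set T := Γ (⋃ K ∈ 𝒦, I ∩ K) with hT
    apply subset_antisymm
    · -- hard direction
      set C : Set P := {x | x ∈ Γ (⋃₀ 𝒦) ∧ ∀ z, z ≤ x → z ∈ I → z ∈ T} with hC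
      have hCid : IsUIdeal (finSpec P) C := by
        constructor
        · intro b a hab hb
          exact ⟨(uideal_GammaU (finSpec P) _).1 hab hb.1,
            fun z hz hzI => hb.2 z (le_trans hz hab) hzI⟩
        · intro S hS hsub j hj
          refine ⟨(uideal_GammaU (finSpec P) (⋃₀ 𝒦)).2 S hS
            (fun x hx => (hsub hx).1) j hj, ?_⟩
          intro z hzj hzI
          -- z ∈ I ∩ Γ (⋃ s ∈ S, dcl {s})
          have hdcl : ∀ s ∈ S, IsUIdeal (finSpec P) {q | q ≤ s} :=
            fun s _ => dcl_uideal s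
          have hjmem : j ∈ Γ (⋃ s ∈ S, {q | q ≤ s}) := by
            apply (uideal_GammaU (finSpec P) _).2 S hS _ j hj
            intro x hx
            apply subset_GammaU (finSpec P) _
            exact Set.mem_biUnion hx (le_refl x)
          have hz1 : z ∈ I ∩ Γ (⋃ s ∈ S, {q | q ≤ s}) :=
            ⟨hzI, (uideal_GammaU (finSpec P) _).1 hzj hjmem⟩
          rw [fin_distrib hd hIid hS.1 _ hdcl] at hz1
          have hsubT : (⋃ s ∈ S, I ∩ {q | q ≤ s}) ⊆ T := by
            intro w hw
            rcases Set.mem_iUnion₂.mp hw with ⟨s, hsS, hwI, hws⟩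
            exact (hsub hsS).2 w hws hwI
          have : Γ (⋃ s ∈ S, I ∩ {q | q ≤ s}) ⊆ T :=
            GammaU_least (finSpec P) (uideal_GammaU (finSpec P) _) hsubT
          exact this hz1
      have hKC : ⋃₀ 𝒦 ⊆ C := by
        rintro k ⟨K, hK, hkK⟩
        refine ⟨subset_GammaU (finSpec P) _ ⟨K, hK, hkK⟩, ?_⟩
        intro z hz hzI
        have hKid : IsUIdeal (finSpec P) K := (GammaU_fixed_iff (finSpec P)).mp (h𝒦 K hK)
        have : z ∈ I ∩ K := ⟨hzI, hKid.1 hz hkK⟩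
        exact subset_GammaU (finSpec P) _ (Set.mem_biUnion hK this)
      have hGC : Γ (⋃₀ 𝒦) ⊆ C := GammaU_least (finSpec P) hCid hKC
      rintro x ⟨hxI, hxG⟩
      exact (hGC hxG).2 x le_rfl hxI
    · apply GammaU_least (finSpec P)
        (uideal_inter (finSpec P) hIid (uideal_GammaU (finSpec P) _))
      intro x hx
      rcases Set.mem_iUnion₂.mp hx with ⟨K, hK, hxI, hxK⟩
      exact ⟨hxI, subset_GammaU (finSpec P) _ ⟨K, hK, hxK⟩⟩
end
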